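/- Let 0<α<1, 1<p<1/α, and q = p/(1−αp). The exponent (p'/q)(1−α) in the bound ‖M⁺_α‖_{L^p_{w^p}→L^q_{w^q}} ≤ c‖w‖_{A_{p,q}^+}^{(p'/q)(1-α)} is sharp in the following concrete sense: there are positive constants c₁, c₂, c₃, c₄ (depending only on p, α) such that for every ε ∈ (0,1), the weight w(x) = |1−x|^{(1-ε)/p'} satisfies c₁ ε^{-q/p'} ≤ ‖w‖_{A_{p,q}^+(ℝ)} ≤ c₂ ε^{-q/p'}, the function f(t) = (1−t)^{ε-1} χ_{(0,1)}(t) satisfies ‖wf‖_{L^p(ℝ)} ≤ c₃ ε^{-1/p}, and ‖w·M⁺_α f‖_{L^q(ℝ)} ≥ c₄ ε^{-1-1/q}. -/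

import Mathlib

open MeasureTheory Set Filter
open scoped ENNReal

noncomputable section

/-- `∫_a^b w` as a lower integral. -/
def lintIoc (w : ℝ → ℝ) (a b : ℝ) : ℝ≥0∞ :=
  ∫⁻ t in Set.Ioc a b, ENNReal.ofReal (w t)

/-- Average `(1/(b-a)) ∫_a^b w`. -/
def avgIoc (w : ℝ → ℝ) (a b : ℝ) : ℝ≥0∞ :=
  (ENNReal.ofReal (b - a))⁻¹ * lintIoc w a b

/-- The one-sided `A_{p,q}^+` characteristic:
`sup_{x,h>0} ((1/h)∫_{x-h}^x u^q)((1/h)∫_x^{x+h} u^{-p'})^{q/p'}`, `p' = p/(p-1)`. -/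
def apqPlusChar (p q : ℝ) (u : ℝ → ℝ) : ℝ≥0∞ :=
  ⨆ (x : ℝ) (h : ℝ) (_ : 0 < h),
    avgIoc (fun t => u t ^ q) (x - h) x *
      avgIoc (fun t => u t ^ (-(p / (p - 1)))) x (x + h) ^ (q / (p / (p - 1)))

/-- Weighted `L^p` "norm" `(∫ g^p w)^{1/p}` of an `ℝ≥0∞`-valued function. -/
def lnormW (p : ℝ) (w : ℝ → ℝ) (g : ℝ → ℝ≥0∞) : ℝ≥0∞ :=
  (∫⁻ x : ℝ, g x ^ p * ENNReal.ofReal (w x)) ^ (1 / p)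

/-- One-sided fractional maximal operator
`M⁺_α f(x) = sup_{h>0} h^{α-1} ∫_x^{x+h} |f|`. -/
def MplusAlpha (α : ℝ) (f : ℝ → ℝ) (x : ℝ) : ℝ≥0∞ :=
  ⨆ (h : ℝ) (_ : 0 < h),
    ENNReal.ofReal (h ^ (α - 1)) * ∫⁻ t in Set.Ioc x (x + h), ENNReal.ofReal |f t|

/-! ### Auxiliary lemmas -/

private lemma lint_right (c s a : ℝ) (hs : 0 ≤ s) (ha : -1 < a) :
    ∫⁻ t in Set.Ioc c (c + s), ENNReal.ofReal ((t - c) ^ a) =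
      ENNReal.ofReal (s ^ (a + 1) / (a + 1)) := by
  have hint : IntervalIntegrable (fun t => (t - c) ^ a) volume c (c + s) := by
    simpa [add_comm] using
      (intervalIntegral.intervalIntegrable_rpow' (a := 0) (b := s) ha).comp_sub_right c
  have hle : c ≤ c + s := by linarith
  have hval : ∫ t in Set.Ioc c (c + s), (t - c) ^ a =
      s ^ (a + 1) / (a + 1) := by
    rw [← intervalIntegral.integral_of_le hle,
      intervalIntegral.integral_comp_sub_right (fun x => x ^ a) c]
    simp only [sub_self, add_sub_cancel_left]
    rw [integral_rpow (Or.inl ha), Real.zero_rpow (by linarith), sub_zero]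
  rw [← hval]
  rw [← MeasureTheory.ofReal_integral_eq_lintegral_ofReal]
  · exact hint.1
  · filter_upwards [ae_restrict_mem measurableSet_Ioc] with t ht
    exact Real.rpow_nonneg (by linarith [ht.1]) a

private lemma lint_left (c s a : ℝ) (hs : 0 ≤ s) (ha : -1 < a) :
    ∫⁻ t in Set.Ioc (c - s) c, ENNReal.ofReal ((c - t) ^ a) =
      ENNReal.ofReal (s ^ (a + 1) / (a + 1)) := by
  have hint : IntervalIntegrable (fun t => (c - t) ^ a) volume (c - s) c := by
    simpa using
      (intervalIntegral.intervalIntegrable_rpow' (a := s) (b := 0) ha).comp_sub_left c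
  have hle : c - s ≤ c := by linarith
  have hval : ∫ t in Set.Ioc (c - s) c, (c - t) ^ a =
      s ^ (a + 1) / (a + 1) := by
    rw [← intervalIntegral.integral_of_le hle,
      intervalIntegral.integral_comp_sub_left (fun x => x ^ a) c]
    simp only [sub_self, sub_sub_cancel]
    rw [integral_rpow (Or.inl ha), Real.zero_rpow (by linarith), sub_zero]
  rw [← hval]
  rw [← MeasureTheory.ofReal_integral_eq_lintegral_ofReal]
  · exact hint.1
  · filter_upwards [ae_restrict_mem measurableSet_Ioc] with t ht
    exact Real.rpow_nonneg (by linarith [ht.2]) a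

private lemma lint_abs_left (b x : ℝ) (hb : -1 < b) (hx : x ≤ 1) :
    ∫⁻ t in Set.Ioc x 1, ENNReal.ofReal (|1 - t| ^ b) =
      ENNReal.ofReal ((1 - x) ^ (b + 1) / (b + 1)) := by
  have h1 : ∫⁻ t in Set.Ioc x 1, ENNReal.ofReal (|1 - t| ^ b) =
      ∫⁻ t in Set.Ioc x 1, ENNReal.ofReal ((1 - t) ^ b) := by
    refine setLIntegral_congr_fun measurableSet_Ioc
      (fun t ht => ?_)
    rw [abs_of_nonneg (by linarith [ht.2])]
  rw [h1]
  have h2 := lint_left 1 (1 - x) b (by linarith) hb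
  rw [show (1 : ℝ) - (1 - x) = x by ring] at h2
  exact h2

private lemma lint_abs_right (b s : ℝ) (hb : -1 < b) (hs : 0 ≤ s) :
    ∫⁻ t in Set.Ioc 1 (1 + s), ENNReal.ofReal (|1 - t| ^ b) =
      ENNReal.ofReal (s ^ (b + 1) / (b + 1)) := by
  have h1 : ∫⁻ t in Set.Ioc 1 (1 + s), ENNReal.ofReal (|1 - t| ^ b) =
      ∫⁻ t in Set.Ioc 1 (1 + s), ENNReal.ofReal ((t - 1) ^ b) := by
    refine setLIntegral_congr_fun measurableSet_Ioc
      (fun t ht => ?_)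
    rw [abs_sub_comm, abs_of_nonneg (by linarith [ht.1])]
  rw [h1]
  exact lint_right 1 s b hs hb

private lemma lint_le_const' {s : Set ℝ} {g : ℝ → ℝ≥0∞} {C : ℝ≥0∞}
    (h : ∀ t ∈ s, g t ≤ C) : ∫⁻ t in s, g t ≤ C * volume s := by
  calc ∫⁻ t in s, g t ≤ ∫⁻ _ in s, C := setLIntegral_mono measurable_const h
    _ = C * volume s := setLIntegral_const s C

private lemma inv_mul_ofReal {h z : ℝ} (hh : 0 < h) :
    (ENNReal.ofReal h)⁻¹ * ENNReal.ofReal z = ENNReal.ofReal (z / h) := by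
  rw [ENNReal.ofReal_div_of_pos hh, div_eq_mul_inv, mul_comm]

private lemma avg_le_of_lint_le {h C : ℝ} {L : ℝ≥0∞} (hh : 0 < h)
    (hL : L ≤ ENNReal.ofReal C * ENNReal.ofReal h) :
    (ENNReal.ofReal h)⁻¹ * L ≤ ENNReal.ofReal C := by
  calc (ENNReal.ofReal h)⁻¹ * L
      ≤ (ENNReal.ofReal h)⁻¹ * (ENNReal.ofReal C * ENNReal.ofReal h) :=
        mul_le_mul_right hL _
    _ = ENNReal.ofReal C := by
        rw [mul_comm (ENNReal.ofReal C), ← mul_assoc,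
          ENNReal.inv_mul_cancel (ENNReal.ofReal_pos.mpr hh).ne' ENNReal.ofReal_ne_top,
          one_mul]

set_option maxHeartbeats 2000000 in
/-- Sharpness of the exponent `(p'/q)(1-α)` for `M⁺_α`: with `w(x) = |1-x|^{(1-ε)/p'}`,
one has `‖w‖_{A_{p,q}^+} ≍ ε^{-q/p'}`; for `f(t) = (1-t)^{ε-1} χ_{(0,1)}(t)` one has
`‖wf‖_{L^p} ≤ c₃ ε^{-1/p}` and `‖w M⁺_α f‖_{L^q} ≥ c₄ ε^{-1-1/q}`. -/
theorem stmt10 (p q α : ℝ) (hα : 0 < α) (hα1 : α < 1) (hp : 1 < p) (hpα : p < 1 / α)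
    (hq : q = p / (1 - α * p)) :
    ∃ c₁ c₂ c₃ c₄ : ℝ, 0 < c₁ ∧ 0 < c₂ ∧ 0 < c₃ ∧ 0 < c₄ ∧
      ∀ ε : ℝ, ε ∈ Set.Ioo (0 : ℝ) 1 →
        let w : ℝ → ℝ := fun x => |1 - x| ^ ((1 - ε) * ((p - 1) / p))
        let f : ℝ → ℝ := fun t => if t ∈ Set.Ioo (0 : ℝ) 1 then (1 - t) ^ (ε - 1) else 0
        ENNReal.ofReal (c₁ * ε ^ (-(q * (p - 1) / p))) ≤ apqPlusChar p q w ∧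
        apqPlusChar p q w ≤ ENNReal.ofReal (c₂ * ε ^ (-(q * (p - 1) / p))) ∧
        lnormW p (fun x => w x ^ p) (fun x => ENNReal.ofReal |f x|) ≤
          ENNReal.ofReal (c₃ * ε ^ (-(1 / p))) ∧
        ENNReal.ofReal (c₄ * ε ^ (-1 - 1 / q)) ≤
          lnormW q (fun x => w x ^ q) (MplusAlpha α f) := by
  have hp0 : (0 : ℝ) < p := by linarith
  have hp1 : (0 : ℝ) < p - 1 := by linarith
  have hαp : α * p < 1 := by
    have := (lt_div_iff₀ hα).mp hpα
    linarith
  have h1αp : (0 : ℝ) < 1 - α * p := by linarith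
  have hq0 : (0 : ℝ) < q := by rw [hq]; positivity
  set r : ℝ := q * (p - 1) / p with hr_def
  have hr0 : (0 : ℝ) < r := by positivity
  have hKey : q * (1 - α) = r + 1 := by
    have hpne := hp0.ne'
    have hqq : q * (1 - α * p) = p := by rw [hq]; exact div_mul_cancel₀ p h1αp.ne'
    rw [hr_def, div_add_one hpne, eq_div_iff hpne]
    linear_combination hqq
  have hqr : q / (p / (p - 1)) = r := div_div_eq_mul_div q p (p - 1)
  refine ⟨1 / (r + 1), (9 : ℝ) ^ r, 1, (q * α + 1) ^ (-(1 / q)), by positivity,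
    Real.rpow_pos_of_pos (by norm_num) r, one_pos,
    Real.rpow_pos_of_pos (by positivity) _, ?_⟩
  intro ε hε
  intro w f
  obtain ⟨hε0, hε1⟩ := hε
  -- basic exponent facts
  have hexp2 : (1 - ε) * ((p - 1) / p) * (-(p / (p - 1))) = ε - 1 := by
    field_simp
    ring
  have hw2 : ∀ t : ℝ, w t ^ (-(p / (p - 1))) = |1 - t| ^ (ε - 1) := by
    intro t
    show (|1 - t| ^ ((1 - ε) * ((p - 1) / p))) ^ (-(p / (p - 1))) = _
    rw [← Real.rpow_mul (abs_nonneg _), hexp2]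
  have hw1 : ∀ t : ℝ, w t ^ q = |1 - t| ^ ((1 - ε) * r) := by
    intro t
    show (|1 - t| ^ ((1 - ε) * ((p - 1) / p))) ^ q = _
    rw [← Real.rpow_mul (abs_nonneg _)]
    congr 1
    rw [hr_def]; ring
  have hBq0 : (0 : ℝ) ≤ (1 - ε) * r := by nlinarith
  have hBqr : (1 - ε) * r ≤ r := by nlinarith
  have hεm1 : (-1 : ℝ) < ε - 1 := by linarith
  have hεr_pos : (0 : ℝ) < ε ^ (-r) := Real.rpow_pos_of_pos hε0 _
  have hεr_ge1 : (1 : ℝ) ≤ ε ^ (-r) := by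
    have := Real.rpow_le_rpow_of_exponent_ge hε0 hε1.le (neg_nonpos.mpr hr0.le)
    simpa using this
  refine ⟨?_, ?_, ?_, ?_⟩
  · -- lower bound for the characteristic
    simp only [apqPlusChar]
    refine le_trans ?_
      (le_iSup_of_le (1:ℝ) (le_iSup_of_le (1:ℝ) (le_iSup_of_le one_pos (le_refl _))))
    simp only [avgIoc, lintIoc, hw1, hw2, hqr]
    rw [show (1:ℝ) - (1 - 1) = 1 by norm_num]
    rw [show (1:ℝ) - 1 = 0 by norm_num]
    rw [show (1:ℝ) + 1 - 1 = 1 by norm_num]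
    rw [lint_abs_left ((1 - ε) * r) 0 (by linarith) (by norm_num)]
    rw [lint_abs_right (ε - 1) 1 hεm1 one_pos.le]
    rw [show ((1:ℝ) - 0) ^ ((1 - ε) * r + 1) = 1 by rw [sub_zero, Real.one_rpow]]
    rw [show ((1:ℝ)) ^ (ε - 1 + 1) = 1 by rw [Real.one_rpow]]
    rw [show ε - 1 + 1 = ε by ring]
    rw [ENNReal.ofReal_one, inv_one, one_mul, one_mul]
    rw [ENNReal.ofReal_rpow_of_pos (by positivity), ← ENNReal.ofReal_mul (by positivity)]
    refine ENNReal.ofReal_le_ofReal ?_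
    rw [one_div ε, Real.inv_rpow hε0.le, ← Real.rpow_neg hε0.le]
    exact mul_le_mul_of_nonneg_right
      (one_div_le_one_div_of_le (by positivity) (by linarith)) hεr_pos.le
  · -- upper bound for the characteristic
    simp only [apqPlusChar]
    refine iSup_le fun x => iSup_le fun h => iSup_le fun hh => ?_
    simp only [avgIoc, lintIoc, hw1, hw2, hqr, sub_sub_cancel, add_sub_cancel_left]
    have habs : ∀ t ∈ Set.Ioc (x-h) x, |1-t| ≤ |1-x| + h := by
      intro t ht
      calc |1-t| = |(1-x) + (x-t)| := by rw [show (1:ℝ)-x+(x-t) = 1-t by ring]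
        _ ≤ |1-x| + |x-t| := abs_add_le _ _
        _ ≤ |1-x| + h := by
            have h5 : |x - t| = x - t := abs_of_nonneg (by linarith [ht.2])
            rw [h5]
            linarith [ht.1]
    have havg1 : ∀ C : ℝ, 0 ≤ C → |1-x| + h ≤ C →
        (ENNReal.ofReal h)⁻¹ * ∫⁻ t in Set.Ioc (x-h) x, ENNReal.ofReal (|1-t| ^ ((1-ε)*r)) ≤
          ENNReal.ofReal (C ^ ((1-ε)*r)) := by
      intro C hC0 hC
      refine avg_le_of_lint_le hh ?_
      have hb := lint_le_const' (s := Set.Ioc (x-h) x)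
        (C := ENNReal.ofReal (C ^ ((1-ε)*r)))
        (fun t ht => ENNReal.ofReal_le_ofReal
          (Real.rpow_le_rpow (abs_nonneg _) (le_trans (habs t ht) hC) hBq0))
      rwa [Real.volume_Ioc, sub_sub_cancel] at hb
    rcases le_or_gt (|1-x|) (2*h) with hcase | hcase
    · -- near case
      have hA1 := havg1 (3*h) (by positivity) (by linarith)
      have hB : ∫⁻ t in Set.Ioc x (x+h), ENNReal.ofReal (|1-t| ^ (ε-1)) ≤
          ENNReal.ofReal ((3/ε) * h^(ε-1)) * ENNReal.ofReal h := by
        have hsub : Set.Ioc x (x+h) ⊆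
            Set.Ioc (1-h) (1+h) ∪ (Set.Ioc x (x+h) ∩ {t : ℝ | h ≤ |1-t|}) := by
          intro t ht
          rcases le_or_gt h (|1-t|) with h2 | h2
          · exact Or.inr ⟨ht, h2⟩
          · have h3 := abs_lt.mp h2
            exact Or.inl ⟨by linarith [h3.2], by linarith [h3.1]⟩
        refine le_trans (lintegral_mono_set hsub) ?_
        refine le_trans (lintegral_union_le _ _ _) ?_
        have hmid : ∫⁻ t in Set.Ioc (1-h) (1+h), ENNReal.ofReal (|1-t| ^ (ε-1)) =
            ENNReal.ofReal (h^ε/ε + h^ε/ε) := by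
          rw [← Set.Ioc_union_Ioc_eq_Ioc (by linarith : (1:ℝ)-h ≤ 1)
              (by linarith : (1:ℝ) ≤ 1+h),
            lintegral_union measurableSet_Ioc (Set.Ioc_disjoint_Ioc_of_le le_rfl),
            lint_abs_left (ε-1) (1-h) hεm1 (by linarith), sub_sub_cancel,
            lint_abs_right (ε-1) h hεm1 hh.le, show ε - 1 + 1 = ε by ring,
            ← ENNReal.ofReal_add (by positivity) (by positivity)]
        have htail : ∫⁻ t in Set.Ioc x (x+h) ∩ {t : ℝ | h ≤ |1-t|},
            ENNReal.ofReal (|1-t| ^ (ε-1)) ≤ ENNReal.ofReal (h^(ε-1) * h) := by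
          refine le_trans (lint_le_const' fun t ht =>
            ENNReal.ofReal_le_ofReal
              (Real.rpow_le_rpow_of_nonpos hh ht.2 (by linarith))) ?_
          rw [ENNReal.ofReal_mul (by positivity)]
          refine mul_le_mul_right ?_ _
          calc volume (Set.Ioc x (x+h) ∩ {t : ℝ | h ≤ |1-t|})
              ≤ volume (Set.Ioc x (x+h)) := measure_mono Set.inter_subset_left
            _ = ENNReal.ofReal h := by rw [Real.volume_Ioc, add_sub_cancel_left]
        refine le_trans (add_le_add hmid.le htail) ?_
        rw [← ENNReal.ofReal_add (by positivity) (by positivity),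
          ← ENNReal.ofReal_mul (by positivity)]
        refine ENNReal.ofReal_le_ofReal ?_
        have hh1 : h^(ε-1) * h = h^ε := by
          rw [← Real.rpow_add_one hh.ne', show ε - 1 + 1 = ε by ring]
        have hh2 : h^ε ≤ h^ε/ε := by
          rw [le_div_iff₀ hε0]
          nlinarith [Real.rpow_nonneg hh.le ε]
        have heq3 : (3/ε) * h^(ε-1) * h = 3*(h^ε/ε) := by
          rw [mul_assoc, hh1]; ring
        linarith [hh2, heq3]
      have havg2 := avg_le_of_lint_le hh hB
      calc ((ENNReal.ofReal h)⁻¹ *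
            ∫⁻ t in Set.Ioc (x-h) x, ENNReal.ofReal (|1-t| ^ ((1-ε)*r))) *
            ((ENNReal.ofReal h)⁻¹ *
            ∫⁻ t in Set.Ioc x (x+h), ENNReal.ofReal (|1-t| ^ (ε-1))) ^ r
          ≤ ENNReal.ofReal ((3*h) ^ ((1-ε)*r)) *
            ENNReal.ofReal (((3/ε) * h^(ε-1)) ^ r) := by
            refine mul_le_mul' hA1 ?_
            rw [← ENNReal.ofReal_rpow_of_nonneg (by positivity) hr0.le]
            exact ENNReal.rpow_le_rpow havg2 hr0.le
        _ ≤ ENNReal.ofReal (9^r * ε^(-r)) := by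
            rw [← ENNReal.ofReal_mul (by positivity)]
            refine ENNReal.ofReal_le_ofReal ?_
            rw [Real.mul_rpow (by norm_num) hh.le,
              Real.mul_rpow (by positivity) (Real.rpow_nonneg hh.le _),
              ← Real.rpow_mul hh.le, Real.div_rpow (by norm_num) hε0.le]
            have hB3 : (3:ℝ)^((1-ε)*r) ≤ 3^r :=
              Real.rpow_le_rpow_of_exponent_le (by norm_num) hBqr
            have h9 : (3:ℝ)^r * 3^r = 9^r := by
              rw [← Real.mul_rpow (by norm_num) (by norm_num)]; norm_num
            have hhr : h^((1-ε)*r) * h^((ε-1)*r) = 1 := by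
              rw [← Real.rpow_add hh, show (1-ε)*r + (ε-1)*r = 0 by ring, Real.rpow_zero]
            have hεinv : ε^(-r) = 1/ε^r := by
              rw [Real.rpow_neg hε0.le, one_div]
            calc (3:ℝ)^((1-ε)*r) * h^((1-ε)*r) * (3^r/ε^r * h^((ε-1)*r))
                = (3^((1-ε)*r) * 3^r) * (h^((1-ε)*r) * h^((ε-1)*r)) / ε^r := by ring
              _ = (3^((1-ε)*r) * 3^r) / ε^r := by rw [hhr, mul_one]
              _ ≤ (3^r * 3^r) / ε^r := by gcongr
              _ = 9^r * ε^(-r) := by rw [h9, hεinv]; ring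
    · -- far case
      have hd0 : (0:ℝ) < |1-x| := by linarith
      have hA1 := havg1 (2*|1-x|) (by positivity) (by linarith)
      have hB : ∫⁻ t in Set.Ioc x (x+h), ENNReal.ofReal (|1-t| ^ (ε-1)) ≤
          ENNReal.ofReal ((|1-x|/2) ^ (ε-1)) * ENNReal.ofReal h := by
        refine le_trans (lint_le_const'
          (C := ENNReal.ofReal ((|1-x|/2) ^ (ε-1))) fun t ht => ?_) ?_
        · have h4 := abs_add_le (1-t) (t-x)
          rw [show (1:ℝ)-t+(t-x) = 1-x by ring] at h4
          have h3 : |t-x| ≤ h := by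
            rw [abs_of_nonneg (by linarith [ht.1])]
            linarith [ht.2]
          have h2 : |1-x|/2 ≤ |1-t| := by linarith
          exact ENNReal.ofReal_le_ofReal
            (Real.rpow_le_rpow_of_nonpos (by positivity) h2 (by linarith))
        · rw [Real.volume_Ioc, add_sub_cancel_left]
      have havg2 := avg_le_of_lint_le hh hB
      calc ((ENNReal.ofReal h)⁻¹ *
            ∫⁻ t in Set.Ioc (x-h) x, ENNReal.ofReal (|1-t| ^ ((1-ε)*r))) *
            ((ENNReal.ofReal h)⁻¹ *
            ∫⁻ t in Set.Ioc x (x+h), ENNReal.ofReal (|1-t| ^ (ε-1))) ^ r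
          ≤ ENNReal.ofReal ((2*|1-x|) ^ ((1-ε)*r)) *
            ENNReal.ofReal (((|1-x|/2) ^ (ε-1)) ^ r) := by
            refine mul_le_mul' hA1 ?_
            rw [← ENNReal.ofReal_rpow_of_nonneg (by positivity) hr0.le]
            exact ENNReal.rpow_le_rpow havg2 hr0.le
        _ ≤ ENNReal.ofReal (9^r * ε^(-r)) := by
            rw [← ENNReal.ofReal_mul (by positivity)]
            refine ENNReal.ofReal_le_ofReal ?_
            rw [Real.mul_rpow (by norm_num) (abs_nonneg _),
              ← Real.rpow_mul (by positivity), Real.div_rpow (abs_nonneg _) (by norm_num)]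
            have hdd : |1-x|^((1-ε)*r) * |1-x|^((ε-1)*r) = 1 := by
              rw [← Real.rpow_add hd0, show (1-ε)*r + (ε-1)*r = 0 by ring, Real.rpow_zero]
            have h2e : (2:ℝ)^((1-ε)*r) / 2^((ε-1)*r) = 2^(2*((1-ε)*r)) := by
              rw [← Real.rpow_sub (by norm_num), show (1-ε)*r - (ε-1)*r = 2*((1-ε)*r) by ring]
            have h24 : (2:ℝ)^(2*((1-ε)*r)) ≤ 9^r := by
              calc (2:ℝ)^(2*((1-ε)*r)) ≤ 2^(2*r) := by
                    refine Real.rpow_le_rpow_of_exponent_le (by norm_num) ?_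
                    nlinarith
                _ = 4^r := by
                    rw [Real.rpow_mul (by norm_num : (0:ℝ) ≤ 2) 2 r]
                    norm_num
                _ ≤ 9^r := Real.rpow_le_rpow (by norm_num) (by norm_num) hr0.le
            calc (2:ℝ)^((1-ε)*r) * |1-x|^((1-ε)*r) *
                  (|1-x|^((ε-1)*r) / 2^((ε-1)*r))
                = ((2:ℝ)^((1-ε)*r) / 2^((ε-1)*r)) *
                  (|1-x|^((1-ε)*r) * |1-x|^((ε-1)*r)) := by ring
              _ = (2:ℝ)^(2*((1-ε)*r)) := by rw [hdd, h2e, mul_one]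
              _ ≤ 9^r * ε^(-r) := by nlinarith [Real.rpow_pos_of_pos (show (0:ℝ) < 9 by norm_num) r]
  · -- L^p bound on wf
    rw [lnormW]
    have hfun : ∀ x : ℝ, (ENNReal.ofReal |f x|) ^ p * ENNReal.ofReal (w x ^ p) =
        (Set.Ioo (0:ℝ) 1).indicator (fun x => ENNReal.ofReal ((1 - x) ^ (ε - 1))) x := by
      intro x
      by_cases hx : x ∈ Set.Ioo (0:ℝ) 1
      · have h1x : (0:ℝ) < 1 - x := by linarith [hx.2]
        have key : ((1-x)^(ε-1))^p * (1-x)^((1 - ε) * ((p - 1) / p) * p) = (1-x)^(ε-1) := by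
          rw [← Real.rpow_mul h1x.le, ← Real.rpow_add h1x]
          congr 1
          field_simp
          ring
        rw [Set.indicator_of_mem hx]
        show (ENNReal.ofReal |if x ∈ Set.Ioo (0:ℝ) 1 then (1 - x) ^ (ε - 1) else 0|) ^ p *
            ENNReal.ofReal ((|1 - x| ^ ((1 - ε) * ((p - 1) / p))) ^ p) = _
        rw [if_pos hx, abs_of_nonneg (Real.rpow_nonneg h1x.le _), abs_of_pos h1x,
          ← Real.rpow_mul h1x.le,
          ENNReal.ofReal_rpow_of_pos (Real.rpow_pos_of_pos h1x _),
          ← ENNReal.ofReal_mul (Real.rpow_nonneg (Real.rpow_nonneg h1x.le _) p), key]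
      · rw [Set.indicator_of_notMem hx]
        show (ENNReal.ofReal |if x ∈ Set.Ioo (0:ℝ) 1 then (1 - x) ^ (ε - 1) else 0|) ^ p *
            ENNReal.ofReal ((|1 - x| ^ ((1 - ε) * ((p - 1) / p))) ^ p) = 0
        rw [if_neg hx]
        simp [ENNReal.zero_rpow_of_pos hp0]
    have h3 : (1:ℝ) ^ (ε - 1 + 1) / (ε - 1 + 1) = 1/ε := by
      rw [Real.one_rpow]; ring_nf
    have h2 := lint_left 1 1 (ε - 1) one_pos.le hεm1
    rw [show (1:ℝ) - 1 = 0 by ring, h3] at h2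
    rw [lintegral_congr hfun, lintegral_indicator measurableSet_Ioo,
      setLIntegral_congr Ioo_ae_eq_Ioc, h2,
      ENNReal.ofReal_rpow_of_pos (by positivity), one_mul]
    apply ENNReal.ofReal_le_ofReal
    rw [one_div ε, Real.inv_rpow hε0.le, ← Real.rpow_neg hε0.le]
  · -- lower bound for the maximal function norm
    have hA : (0:ℝ) < q * α + 1 := by positivity
    have hE : (0:ℝ) < ε * (q * α + 1) := by positivity
    have hE1 : (-1:ℝ) < ε * (q * α + 1) - 1 := by linarith
    have hexpE : (α - 1 + ε) * q + (1 - ε) * r = ε * (q * α + 1) - 1 := by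
      linear_combination (ε - 1) * hKey
    have hMf : ∀ x ∈ Set.Ioo (0:ℝ) 1,
        ENNReal.ofReal ((1 - x) ^ (α - 1 + ε) / ε) ≤ MplusAlpha α f x := by
      intro x hx
      have h1x : (0:ℝ) < 1 - x := by linarith [hx.2]
      have hI : ∫⁻ t in Set.Ioc x (x + (1 - x)), ENNReal.ofReal |f t| =
          ENNReal.ofReal ((1 - x) ^ ε / ε) := by
        rw [show x + (1 - x) = 1 by ring]
        have hcong : ∫⁻ t in Set.Ioc x 1, ENNReal.ofReal |f t| =
            ∫⁻ t in Set.Ioc x 1, ENNReal.ofReal ((1 - t) ^ (ε - 1)) := by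
          refine setLIntegral_congr_fun measurableSet_Ioc
            (fun t ht => ?_)
          rcases eq_or_lt_of_le ht.2 with h1 | h1
          · show ENNReal.ofReal |if t ∈ Set.Ioo (0:ℝ) 1 then (1-t)^(ε-1) else 0| = _
            rw [if_neg (by simp [h1]), h1]
            norm_num [Real.zero_rpow (show ε - 1 ≠ 0 by linarith)]
          · have htm : t ∈ Set.Ioo (0:ℝ) 1 := ⟨lt_trans hx.1 ht.1, h1⟩
            show ENNReal.ofReal |if t ∈ Set.Ioo (0:ℝ) 1 then (1-t)^(ε-1) else 0| = _
            rw [if_pos htm, abs_of_nonneg (Real.rpow_nonneg (by linarith [htm.2]) _)]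
        rw [hcong]
        have h2 := lint_left 1 (1 - x) (ε - 1) h1x.le hεm1
        rw [show (1:ℝ) - (1 - x) = x by ring, show ε - 1 + 1 = ε by ring] at h2
        exact h2
      refine le_trans ?_ (le_iSup_of_le (1 - x) (le_iSup_of_le h1x (le_refl _)))
      rw [hI, ← ENNReal.ofReal_mul (Real.rpow_nonneg h1x.le _)]
      apply ENNReal.ofReal_le_ofReal
      have heq : (1-x)^(α-1) * ((1-x)^ε/ε) = (1-x)^(α - 1 + ε)/ε := by
        rw [Real.rpow_add h1x]; ring
      exact heq.ge
    have hlow : ENNReal.ofReal (ε^(-q) / (ε * (q*α+1))) ≤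
        ∫⁻ x : ℝ, (MplusAlpha α f x)^q * ENNReal.ofReal (w x ^ q) := by
      have step1 : ∫⁻ x in Set.Ioc 0 1,
          ENNReal.ofReal (ε^(-q) * (1-x)^(ε*(q*α+1)-1)) =
          ENNReal.ofReal (ε^(-q)/(ε*(q*α+1))) := by
        have hsplit : ∀ x : ℝ, ENNReal.ofReal (ε^(-q) * (1-x)^(ε*(q*α+1)-1)) =
            ENNReal.ofReal (ε^(-q)) * ENNReal.ofReal ((1-x)^(ε*(q*α+1)-1)) :=
          fun x => ENNReal.ofReal_mul (by positivity)
        simp only [hsplit]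
        rw [lintegral_const_mul' _ _ ENNReal.ofReal_ne_top]
        have h2 := lint_left 1 1 (ε*(q*α+1)-1) one_pos.le hE1
        rw [show (1:ℝ) - 1 = 0 by ring, Real.one_rpow,
          show ε*(q*α+1)-1+1 = ε*(q*α+1) by ring] at h2
        rw [h2, ← ENNReal.ofReal_mul (by positivity), mul_one_div]
      have step2 : ∫⁻ x in Set.Ioc 0 1,
          ENNReal.ofReal (ε^(-q) * (1-x)^(ε*(q*α+1)-1)) ≤
          ∫⁻ x : ℝ, (MplusAlpha α f x)^q * ENNReal.ofReal (w x ^ q) := by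
        rw [setLIntegral_congr Ioo_ae_eq_Ioc.symm]
        refine le_trans (setLIntegral_mono' measurableSet_Ioo fun x hx => ?_)
          (setLIntegral_le_lintegral _ _)
        have h1x : (0:ℝ) < 1 - x := by linarith [hx.2]
        have hwx : w x ^ q = (1-x) ^ ((1-ε)*r) := by
          rw [hw1 x, abs_of_pos h1x]
        calc ENNReal.ofReal (ε^(-q) * (1-x)^(ε*(q*α+1)-1))
            = ENNReal.ofReal (((1-x)^(α - 1 + ε)/ε)^q) *
              ENNReal.ofReal ((1-x)^((1-ε)*r)) := by
              rw [← ENNReal.ofReal_mul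
                (Real.rpow_nonneg (div_nonneg (Real.rpow_nonneg h1x.le _) hε0.le) q)]
              congr 1
              rw [Real.div_rpow (Real.rpow_nonneg h1x.le _) hε0.le,
                ← Real.rpow_mul h1x.le, div_mul_eq_mul_div, ← Real.rpow_add h1x,
                hexpE, Real.rpow_neg hε0.le]
              ring
          _ ≤ (MplusAlpha α f x)^q * ENNReal.ofReal (w x ^ q) := by
              rw [hwx]
              refine mul_le_mul_left ?_ _
              rw [← ENNReal.ofReal_rpow_of_nonneg (by positivity) hq0.le]
              exact ENNReal.rpow_le_rpow (hMf x hx) hq0.le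
      exact step1 ▸ step2
    rw [lnormW]
    refine le_trans ?_ (ENNReal.rpow_le_rpow hlow (by positivity))
    rw [ENNReal.ofReal_rpow_of_pos (by positivity)]
    apply ENNReal.ofReal_le_ofReal
    have hb : (0:ℝ) ≤ (q*α+1) ^ (-(1/q)) * ε ^ (-1 - 1/q) := by positivity
    have hkey4 : ε^(-q)/(ε*(q*α+1)) = ((q*α+1) ^ (-(1/q)) * ε ^ (-1 - 1/q))^q := by
      rw [Real.mul_rpow (by positivity) (by positivity),
        ← Real.rpow_mul (by positivity), ← Real.rpow_mul hε0.le,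
        show -(1/q)*q = -1 by field_simp,
        show (-1-1/q)*q = -q + -1 by field_simp; ring,
        Real.rpow_neg_one, Real.rpow_add hε0, Real.rpow_neg_one]
      have hne1 : ε * (q * α + 1) ≠ 0 := by positivity
      field_simp
    rw [hkey4, one_div]
    exact le_of_eq (Real.rpow_rpow_inv (by positivity) hq0.ne').symm

end
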